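/- Let J_i = ∑_{j<i} (j i) ∈ ℂ[S_n] be the Jucys-Murphy elements. Then e_k(J_1, ..., J_n) = ∑_{μ ⊢ n, ℓ(μ) = n-k} C_μ, where e_k is the k-th elementary symmetric polynomial and C_μ is the formal sum of all permutations of cycle type μ in the group algebra ℂ[S_n]. -/

import Mathlib

open Finset MonoidAlgebra Equiv

/-- The Jucys–Murphy element `Jᵢ = ∑_{j<i} (j i)` in `ℂ[Sₙ]`. -/
noncomputable def JM (n : ℕ) (i : Fin n) : MonoidAlgebra ℂ (Equiv.Perm (Fin n)) :=
  ∑ j ∈ Finset.univ.filter (fun j => j < i),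
    MonoidAlgebra.of ℂ (Equiv.Perm (Fin n)) (Equiv.swap j i)

section CycleAux

variable {α : Type*} [Fintype α] [DecidableEq α]

open Equiv.Perm

lemma jucys_isCycle_mul_swap {γ : Equiv.Perm α} (hγ : γ.IsCycle) {j p : α}
    (hj : γ j ≠ j) (hp : γ p = p) : (γ * Equiv.swap j p).IsCycle := by
  have hjp : j ≠ p := fun h => hj (by rw [h]; exact hp)
  have hγjp : γ j ≠ p := fun h => hjp (γ.injective (h.trans hp.symm))
  set σ := γ * Equiv.swap j p with hσ
  have hσp : σ p = γ j := by simp [hσ, Equiv.Perm.mul_apply, Equiv.swap_apply_right]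
  have hσj : σ j = p := by simp [hσ, Equiv.Perm.mul_apply, Equiv.swap_apply_left, hp]
  have hσother : ∀ y, y ≠ j → y ≠ p → σ y = γ y := by
    intro y h1 h2
    simp [hσ, Equiv.Perm.mul_apply, Equiv.swap_apply_of_ne_of_ne h1 h2]
  have hpj : σ.SameCycle p j := Equiv.Perm.SameCycle.symm ⟨1, by simpa using hσj⟩
  have key : ∀ m : ℕ, σ.SameCycle p ((γ ^ m) j) := by
    intro m
    induction m with
    | zero => simpa using hpj
    | succ m ih =>
      have hpow : (γ ^ (m + 1)) j = γ ((γ ^ m) j) := by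
        rw [pow_succ']; rfl
      by_cases hyj : (γ ^ m) j = j
      · rw [hpow, hyj, ← hσp]
        exact ⟨1, rfl⟩
      · have hysupp : (γ ^ m) j ∈ γ.support :=
          Equiv.Perm.pow_apply_mem_support.mpr (Equiv.Perm.mem_support.mpr hj)
        have hyp : (γ ^ m) j ≠ p := by
          intro h
          rw [h] at hysupp
          exact (Equiv.Perm.mem_support.mp hysupp) hp
        have : σ ((γ ^ m) j) = γ ((γ ^ m) j) := hσother _ hyj hyp
        rw [hpow, ← this]
        exact ih.trans ⟨1, rfl⟩
  refine ⟨p, by rw [hσp]; exact fun h => hjp (γ.injective (h.trans hp.symm)) |>.elim, ?_⟩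
  intro y hy
  by_cases hyp : y = p
  · exact hyp ▸ Equiv.Perm.SameCycle.refl σ p
  by_cases hyj : y = j
  · exact hyj ▸ hpj
  · have hyγ : γ y ≠ y := by
      intro h
      exact hy (by rw [hσother y hyj hyp, h])
    obtain ⟨i, hi⟩ := hγ.exists_pow_eq hj hyγ
    exact hi ▸ key i

lemma jucys_support_mul_swap {γ : Equiv.Perm α} {j p : α}
    (hj : γ j ≠ j) (hp : γ p = p) :
    (γ * Equiv.swap j p).support = insert p γ.support := by
  have hjp : j ≠ p := fun h => hj (by rw [h]; exact hp)
  have hγjp : γ j ≠ p := fun h => hjp (γ.injective (h.trans hp.symm))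
  ext x
  simp only [Equiv.Perm.mem_support, Finset.mem_insert]
  by_cases hxp : x = p
  · subst hxp
    simp [Equiv.Perm.mul_apply, Equiv.swap_apply_right, hγjp]
  by_cases hxj : x = j
  · subst hxj
    simp [Equiv.Perm.mul_apply, Equiv.swap_apply_left, hp, hj, Ne.symm hjp]
  · simp only [Equiv.Perm.mul_apply, Equiv.swap_apply_of_ne_of_ne hxj hxp]
    exact ⟨fun h => Or.inr h, fun h => h.resolve_left hxp⟩

lemma jucys_count_mul_swap (τ : Equiv.Perm α) {j p : α} (hp : τ p = p) (hjp : j ≠ p) :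
    (τ * Equiv.swap j p).cycleType.sum + Multiset.card τ.cycleType
      = Multiset.card (τ * Equiv.swap j p).cycleType + τ.cycleType.sum + 1 := by
  by_cases hj : τ j = j
  · have hd : τ.Disjoint (Equiv.swap j p) := by
      intro x
      by_cases hxj : x = j
      · exact Or.inl (hxj ▸ hj)
      by_cases hxp : x = p
      · exact Or.inl (hxp ▸ hp)
      · exact Or.inr (Equiv.swap_apply_of_ne_of_ne hxj hxp)
    have hswap : (Equiv.swap j p).cycleType = {2} := by
      rw [(Equiv.Perm.isCycle_swap hjp).cycleType, Equiv.Perm.support_swap hjp]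
      rw [Finset.card_insert_of_notMem (by simpa using hjp), Finset.card_singleton]
    rw [hd.cycleType_mul, hswap]
    simp
    omega
  · set γ := τ.cycleOf j with hγdef
    have hmem : γ ∈ τ.cycleFactorsFinset :=
      Equiv.Perm.cycleOf_mem_cycleFactorsFinset_iff.mpr (Equiv.Perm.mem_support.mpr hj)
    have hγc : γ.IsCycle := (Equiv.Perm.mem_cycleFactorsFinset_iff.mp hmem).1
    have hγj : γ j ≠ j := by
      rw [hγdef, Equiv.Perm.cycleOf_apply_self]; exact hj
    have hγsupp : γ.support ⊆ τ.support := Equiv.Perm.mem_cycleFactorsFinset_support_le hmem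
    have hpτ : p ∉ τ.support := Equiv.Perm.notMem_support.mpr hp
    have hγp : γ p = p := Equiv.Perm.notMem_support.mp (fun h => hpτ (hγsupp h))
    have hdisj : Equiv.Perm.Disjoint (τ * γ⁻¹) γ :=
      Equiv.Perm.disjoint_mul_inv_of_mem_cycleFactorsFinset hmem
    have hτeq : τ = (τ * γ⁻¹) * γ := by group
    have hδp : (τ * γ⁻¹) p = p := by
      have hsup := Equiv.Perm.support_mul_le τ γ⁻¹
      have : p ∉ (τ * γ⁻¹).support := by
        intro h
        have := hsup h
        simp only [Finset.sup_eq_union, Finset.mem_union, Equiv.Perm.support_inv] at this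
        exact this.elim (fun h' => hpτ h') (fun h' => hpτ (hγsupp h'))
      exact Equiv.Perm.notMem_support.mp this
    have hγ' : (γ * Equiv.swap j p).IsCycle := jucys_isCycle_mul_swap hγc hγj hγp
    have hsupp' : (γ * Equiv.swap j p).support = insert p γ.support :=
      jucys_support_mul_swap hγj hγp
    have hdisj' : Equiv.Perm.Disjoint (τ * γ⁻¹) (γ * Equiv.swap j p) := by
      intro x
      by_cases h : (γ * Equiv.swap j p) x = x
      · exact Or.inr h
      · have hx : x ∈ insert p γ.support := by
          rw [← hsupp']; exact Equiv.Perm.mem_support.mpr h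
        rcases Finset.mem_insert.mp hx with rfl | hx
        · exact Or.inl hδp
        · exact Or.inl ((hdisj x).resolve_right (Equiv.Perm.mem_support.mp hx))
    have e1 : τ * Equiv.swap j p = (τ * γ⁻¹) * (γ * Equiv.swap j p) := by group
    have hpγ : p ∉ γ.support := fun h => hpτ (hγsupp h)
    have hct : τ.cycleType = (τ * γ⁻¹).cycleType + {#γ.support} := by
      conv_lhs => rw [hτeq]
      rw [hdisj.cycleType_mul, hγc.cycleType]
    rw [e1, hdisj'.cycleType_mul, hγ'.cycleType, hsupp',
      Finset.card_insert_of_notMem hpγ, hct]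
    simp
    omega

end CycleAux


lemma jucys_sort_insert_max {n : ℕ} {s : Finset (Fin n)} {p : Fin n}
    (h : ∀ b ∈ s, b < p) :
    (insert p s).sort (· ≤ ·) = s.sort (· ≤ ·) ++ [p] := by
  have hp : p ∉ s := fun hp => lt_irrefl p (h p hp)
  have hperm : List.Perm ((insert p s).sort (· ≤ ·)) (s.sort (· ≤ ·) ++ [p]) := by
    rw [← Multiset.coe_eq_coe, ← Multiset.coe_add, Finset.sort_eq, Finset.sort_eq,
      Finset.insert_val_of_notMem hp]
    rw [add_comm]
    rfl
  have hs1 : ((insert p s).sort (· ≤ ·)).Pairwise (· ≤ ·) := Finset.pairwise_sort _ _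
  have hs2 : (s.sort (· ≤ ·) ++ [p]).Pairwise (· ≤ ·) := by
    refine List.pairwise_append.mpr ⟨Finset.pairwise_sort _ _, List.pairwise_singleton _ p, ?_⟩
    intro a ha b hb
    rw [List.mem_singleton] at hb
    subst hb
    exact le_of_lt (h a ((Finset.mem_sort _).mp ha))
  exact List.Perm.eq_of_pairwise' hs1 hs2 hperm

lemma jucys_eq_one_of_sum_eq_card {n : ℕ} {σ : Equiv.Perm (Fin n)}
    (h : σ.cycleType.sum = Multiset.card σ.cycleType) : σ = 1 := by
  by_contra hσ
  have hcard : 0 < Multiset.card σ.cycleType := Equiv.Perm.card_cycleType_pos.mpr hσ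
  have h2 : Multiset.card σ.cycleType • 2 ≤ σ.cycleType.sum :=
    Multiset.card_nsmul_le_sum (fun x hx => Equiv.Perm.two_le_of_mem_cycleType hx)
  simp only [smul_eq_mul] at h2
  omega

lemma jucys_filter_zero {n m : ℕ} :
    Finset.univ.filter (fun σ : Equiv.Perm (Fin n) =>
        σ.cycleType.sum = Multiset.card σ.cycleType + 0 ∧
          ∀ x : Fin n, m ≤ (x : ℕ) → σ x = x) = {1} := by
  ext σ
  simp only [Finset.mem_filter, Finset.mem_univ, true_and, Finset.mem_singleton, add_zero]
  constructor
  · exact fun h => jucys_eq_one_of_sum_eq_card h.1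
  · rintro rfl
    simp [Equiv.Perm.cycleType_one]


lemma jucys_apply_inv_self {α : Type*} (f : Equiv.Perm α) (x : α) : f (f⁻¹ x) = x :=
  Equiv.apply_symm_apply f x

lemma jucys_inv_apply_self {α : Type*} (f : Equiv.Perm α) (x : α) : f⁻¹ (f x) = x :=
  Equiv.symm_apply_apply f x

lemma jucys_key (n : ℕ) : ∀ (m : ℕ), m ≤ n → ∀ (k : ℕ),
    ∑ s ∈ (Finset.univ.filter (fun i : Fin n => (i : ℕ) < m)).powersetCard k,
        ((s.sort (· ≤ ·)).map (JM n)).prod =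
      ∑ σ ∈ Finset.univ.filter (fun σ : Equiv.Perm (Fin n) =>
          σ.cycleType.sum = Multiset.card σ.cycleType + k ∧ ∀ x : Fin n, m ≤ (x : ℕ) → σ x = x),
        MonoidAlgebra.of ℂ (Equiv.Perm (Fin n)) σ := by
  intro m
  induction m with
  | zero =>
    intro _ k
    have hemp : (Finset.univ.filter (fun i : Fin n => (i : ℕ) < 0)) = ∅ := by
      ext x; simp
    rw [hemp]
    cases k with
    | zero =>
      rw [Finset.powersetCard_zero, jucys_filter_zero, Finset.sum_singleton,
        Finset.sum_singleton, Finset.sort_empty]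
      simp [MonoidAlgebra.one_def]
    | succ k =>
      have h1 : (∅ : Finset (Fin n)).powersetCard (k + 1) = ∅ := by
        ext s
        simp only [Finset.mem_powersetCard, Finset.subset_empty, Finset.notMem_empty,
          iff_false, not_and]
        rintro rfl
        simp
      have h2 : Finset.univ.filter (fun σ : Equiv.Perm (Fin n) =>
          σ.cycleType.sum = Multiset.card σ.cycleType + (k + 1) ∧
            ∀ x : Fin n, 0 ≤ (x : ℕ) → σ x = x) = ∅ := by
        ext σ
        simp only [Finset.mem_filter, Finset.mem_univ, true_and, Finset.notMem_empty,
          iff_false, not_and]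
        intro h1' h2'
        have hσ : σ = 1 := Equiv.ext fun x => h2' x (Nat.zero_le _)
        subst hσ
        simp [Equiv.Perm.cycleType_one] at h1'
      rw [h1, h2]
      simp
  | succ m ih =>
    intro hm k
    have hmn : m ≤ n := Nat.le_of_succ_le hm
    have hmlt : m < n := hm
    set p : Fin n := ⟨m, hmlt⟩ with hpdef
    cases k with
    | zero =>
      rw [Finset.powersetCard_zero, jucys_filter_zero, Finset.sum_singleton,
        Finset.sum_singleton, Finset.sort_empty]
      simp [MonoidAlgebra.one_def]
    | succ k =>
      have hpv : (p : ℕ) = m := rfl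
      have hS : Finset.univ.filter (fun i : Fin n => (i : ℕ) < m + 1)
          = insert p (Finset.univ.filter (fun i : Fin n => (i : ℕ) < m)) := by
        ext x
        simp only [Finset.mem_filter, Finset.mem_univ, true_and, Finset.mem_insert]
        rw [Nat.lt_succ_iff_lt_or_eq]
        constructor
        · rintro (h | h)
          · exact Or.inr h
          · exact Or.inl (Fin.ext h)
        · rintro (rfl | h)
          · exact Or.inr rfl
          · exact Or.inl h
      have hpS : p ∉ Finset.univ.filter (fun i : Fin n => (i : ℕ) < m) := by
        simp [hpdef]
      have hdisj : Disjoint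
          ((Finset.univ.filter (fun i : Fin n => (i : ℕ) < m)).powersetCard (k + 1))
          (((Finset.univ.filter (fun i : Fin n => (i : ℕ) < m)).powersetCard k).image
            (insert p)) := by
        rw [Finset.disjoint_left]
        intro s hs1 hs2
        rw [Finset.mem_powersetCard] at hs1
        have hps : p ∉ s := fun hp => hpS (hs1.1 hp)
        rw [Finset.mem_image] at hs2
        obtain ⟨t, _, rfl⟩ := hs2
        exact hps (Finset.mem_insert_self p t)
      rw [hS, Finset.powersetCard_succ_insert hpS, Finset.sum_union hdisj]
      have hlt : ∀ s ∈ (Finset.univ.filter (fun i : Fin n => (i : ℕ) < m)).powersetCard k,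
          ∀ b ∈ s, b < p := by
        intro s hs b hb
        rw [Finset.mem_powersetCard] at hs
        have := hs.1 hb
        rw [Finset.mem_filter] at this
        exact Fin.lt_def.mpr this.2
      have himage : ∑ s ∈ ((Finset.univ.filter
              (fun i : Fin n => (i : ℕ) < m)).powersetCard k).image (insert p),
            ((s.sort (· ≤ ·)).map (JM n)).prod
          = ∑ s ∈ (Finset.univ.filter (fun i : Fin n => (i : ℕ) < m)).powersetCard k,
            ((s.sort (· ≤ ·)).map (JM n)).prod * JM n p := by
        rw [Finset.sum_image]
        · apply Finset.sum_congr rfl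
          intro s hs
          rw [jucys_sort_insert_max (hlt s hs), List.map_append, List.prod_append]
          simp
        · intro x hx y hy hxy
          have hpx : p ∉ x := fun hp => hpS ((Finset.mem_powersetCard.mp hx).1 hp)
          have hpy : p ∉ y := fun hp => hpS ((Finset.mem_powersetCard.mp hy).1 hp)
          rw [← Finset.erase_insert hpx, hxy, Finset.erase_insert hpy]
      rw [himage, ← Finset.sum_mul, ih hmn k, ih hmn (k + 1)]
      -- now expand JM n p and build the double sum
      have hJM : JM n p = ∑ j ∈ Finset.univ.filter (fun j : Fin n => j < p),
          MonoidAlgebra.of ℂ (Equiv.Perm (Fin n)) (Equiv.swap j p) := rfl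
      rw [hJM, Finset.sum_mul_sum]
      -- RHS split
      have hsplit : Finset.univ.filter (fun σ : Equiv.Perm (Fin n) =>
            σ.cycleType.sum = Multiset.card σ.cycleType + (k + 1) ∧
              ∀ x : Fin n, m + 1 ≤ (x : ℕ) → σ x = x)
          = Finset.univ.filter (fun σ : Equiv.Perm (Fin n) =>
              σ.cycleType.sum = Multiset.card σ.cycleType + (k + 1) ∧
                ∀ x : Fin n, m ≤ (x : ℕ) → σ x = x)
            ∪ Finset.univ.filter (fun σ : Equiv.Perm (Fin n) =>
              σ.cycleType.sum = Multiset.card σ.cycleType + (k + 1) ∧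
                (∀ x : Fin n, m + 1 ≤ (x : ℕ) → σ x = x) ∧ σ p ≠ p) := by
        ext σ
        simp only [Finset.mem_filter, Finset.mem_univ, true_and, Finset.mem_union]
        constructor
        · rintro ⟨h1, h2⟩
          by_cases hp : σ p = p
          · refine Or.inl ⟨h1, fun x hx => ?_⟩
            rcases Nat.eq_or_lt_of_le hx with heq | hlt'
            · have : x = p := Fin.ext heq.symm
              rw [this]; exact hp
            · exact h2 x hlt'
          · exact Or.inr ⟨h1, h2, hp⟩
        · rintro (⟨h1, h2⟩ | ⟨h1, h2, _⟩)
          · exact ⟨h1, fun x hx => h2 x (Nat.le_of_succ_le hx)⟩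
          · exact ⟨h1, h2⟩
      have hdisj2 : Disjoint
          (Finset.univ.filter (fun σ : Equiv.Perm (Fin n) =>
            σ.cycleType.sum = Multiset.card σ.cycleType + (k + 1) ∧
              ∀ x : Fin n, m ≤ (x : ℕ) → σ x = x))
          (Finset.univ.filter (fun σ : Equiv.Perm (Fin n) =>
            σ.cycleType.sum = Multiset.card σ.cycleType + (k + 1) ∧
              (∀ x : Fin n, m + 1 ≤ (x : ℕ) → σ x = x) ∧ σ p ≠ p)) := by
        rw [Finset.disjoint_left]
        intro σ h1 h2
        rw [Finset.mem_filter] at h1 h2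
        exact h2.2.2.2 (h1.2.2 p (le_refl m))
      rw [hsplit, Finset.sum_union hdisj2]
      congr 1
      -- the bijection
      rw [← Finset.sum_product']
      refine Finset.sum_bij'
        (fun x _ => x.1 * Equiv.swap x.2 p)
        (fun σ _ => (σ * Equiv.swap (σ⁻¹ p) p, σ⁻¹ p))
        ?_ ?_ ?_ ?_ ?_
      · -- hi : maps into C
        rintro ⟨τ, j⟩ hx
        show τ * Equiv.swap j p ∈ Finset.univ.filter (fun σ : Equiv.Perm (Fin n) =>
              σ.cycleType.sum = Multiset.card σ.cycleType + (k + 1) ∧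
                (∀ x : Fin n, m + 1 ≤ (x : ℕ) → σ x = x) ∧ σ p ≠ p)
        rw [Finset.mem_product] at hx
        obtain ⟨hτ, hj⟩ := hx
        rw [Finset.mem_filter] at hτ hj
        dsimp only at hτ hj
        have hcond := hτ.2.1
        have hfix := hτ.2.2
        have hjlt : (j : ℕ) < m := by
          have := Fin.lt_def.mp hj.2
          rwa [hpv] at this
        have hjp : j ≠ p := Fin.ne_of_lt hj.2
        have hτp : τ p = p := hfix p (le_refl m)
        rw [Finset.mem_filter]
        refine ⟨Finset.mem_univ _, ?_, ?_, ?_⟩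
        · have := jucys_count_mul_swap τ hτp hjp
          omega
        · intro x hx'
          have hxp : x ≠ p := by
            intro h; rw [h] at hx'; rw [hpv] at hx'; omega
          have hxj : x ≠ j := by
            intro h; rw [h] at hx'; omega
          rw [Equiv.Perm.mul_apply, Equiv.swap_apply_of_ne_of_ne hxj hxp]
          exact hfix x (Nat.le_of_succ_le hx')
        · rw [Equiv.Perm.mul_apply, Equiv.swap_apply_right]
          intro h
          exact hjp (τ.injective (h.trans hτp.symm))
      · -- hj : maps back
        intro σ hσ
        show (σ * Equiv.swap (σ⁻¹ p) p, σ⁻¹ p) ∈ (Finset.univ.filter (fun τ : Equiv.Perm (Fin n) =>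
              τ.cycleType.sum = Multiset.card τ.cycleType + k ∧
                ∀ x : Fin n, m ≤ (x : ℕ) → τ x = x)) ×ˢ (Finset.univ.filter (fun j : Fin n => j < p))
        rw [Finset.mem_filter] at hσ
        obtain ⟨-, hcond, hfix, hp⟩ := hσ
        have hjne : σ⁻¹ p ≠ p := fun h => hp (by conv_lhs => rw [← h]; rw [jucys_apply_inv_self]  )
        have hjval : ((σ⁻¹ p : Fin n) : ℕ) < m := by
          by_contra hge
          push_neg at hge
          rcases Nat.eq_or_lt_of_le hge with heq | hlt'
          · exact hjne (Fin.ext heq.symm)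
          · have hfx := hfix (σ⁻¹ p) hlt'
            rw [jucys_apply_inv_self] at hfx
            exact hjne hfx.symm
        have hτp : (σ * Equiv.swap (σ⁻¹ p) p) p = p := by
          rw [Equiv.Perm.mul_apply, Equiv.swap_apply_right, jucys_apply_inv_self]
        have hback : (σ * Equiv.swap (σ⁻¹ p) p) * Equiv.swap (σ⁻¹ p) p = σ := by
          rw [mul_assoc, Equiv.swap_mul_self, mul_one]
        rw [Finset.mem_product]
        dsimp only
        constructor
        · rw [Finset.mem_filter]
          refine ⟨Finset.mem_univ _, ?_, ?_⟩
          · have := jucys_count_mul_swap (σ * Equiv.swap (σ⁻¹ p) p) hτp hjne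
            rw [hback] at this
            omega
          · intro x hx'
            rcases Nat.eq_or_lt_of_le hx' with heq | hlt'
            · have : x = p := Fin.ext heq.symm
              rw [this]; exact hτp
            · have hxp : x ≠ p := by
                intro h; rw [h] at hlt'; rw [hpv] at hlt'; omega
              have hxj : x ≠ σ⁻¹ p := by
                intro h; rw [h] at hlt'; omega
              rw [Equiv.Perm.mul_apply, Equiv.swap_apply_of_ne_of_ne hxj hxp]
              exact hfix x hlt'
        · rw [Finset.mem_filter]
          refine ⟨Finset.mem_univ _, Fin.lt_def.mpr ?_⟩
          rw [hpv]
          exact hjval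
      · -- left_inv
        rintro ⟨τ, j⟩ hx
        rw [Finset.mem_product] at hx
        obtain ⟨hτ, hj⟩ := hx
        rw [Finset.mem_filter] at hτ hj
        have hτp : τ p = p := hτ.2.2 p (le_refl m)
        show (τ * Equiv.swap j p * Equiv.swap ((τ * Equiv.swap j p)⁻¹ p) p,
          (τ * Equiv.swap j p)⁻¹ p) = (τ, j)
        have hinv : (τ * Equiv.swap j p)⁻¹ p = j := by
          rw [mul_inv_rev, Equiv.Perm.mul_apply, Equiv.swap_inv]
          have h3 : τ⁻¹ p = p := by
            rw [← hτp, jucys_inv_apply_self, hτp]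
          rw [h3, Equiv.swap_apply_right]
        rw [hinv, mul_assoc, Equiv.swap_mul_self, mul_one]
      · -- right_inv
        intro σ hσ
        show σ * Equiv.swap (σ⁻¹ p) p * Equiv.swap (σ⁻¹ p) p = σ
        rw [mul_assoc, Equiv.swap_mul_self, mul_one]
      · -- values
        rintro ⟨τ, j⟩ hx
        exact (map_mul (MonoidAlgebra.of ℂ (Equiv.Perm (Fin n))) τ (Equiv.swap j p)).symm

/-- Jucys' theorem: `e_k(J₁,…,Jₙ)` is the sum of all permutations of `Fin n`
whose cycle type (including fixed points as parts `1`) has `n - k` parts.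
Since Mathlib's `cycleType` records only the nontrivial cycles, a permutation
`σ` has `n - σ.cycleType.sum + σ.cycleType.card` parts in total, and the
condition `ℓ(μ) = n - k` reads `σ.cycleType.sum = σ.cycleType.card + k`.
The elementary symmetric function is expanded as the sum over `k`-subsets of
the (ordered) products of the commuting elements `Jᵢ`. -/
theorem jucys_esymm (n k : ℕ) :
    ∑ s ∈ Finset.univ.powersetCard k,
        ((s.sort (· ≤ ·)).map (JM n)).prod =
      ∑ σ ∈ Finset.univ.filter
          (fun σ : Equiv.Perm (Fin n) => σ.cycleType.sum = σ.cycleType.card + k),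
        MonoidAlgebra.of ℂ (Equiv.Perm (Fin n)) σ := by
  have h := jucys_key n n (le_refl n) k
  have h1 : Finset.univ.filter (fun i : Fin n => (i : ℕ) < n) = Finset.univ := by
    apply Finset.filter_true_of_mem
    intro i _
    exact i.isLt
  rw [h1] at h
  rw [h]
  apply Finset.sum_congr
  · apply Finset.filter_congr
    intro σ _
    constructor
    · exact fun h' => h'.1
    · exact fun h' => ⟨h', fun x hx => absurd x.isLt (by omega)⟩
  · intros
    rfl
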